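/- arXiv:2507.20772 — 2 statements merged into one kernel-verified Lean document; each statement's English description precedes it below -/
import Mathlib

section
/- Let λ̊ : ℝ → ℝ, λ : ℝ → ℝ³, and ω̃ : ℝ → ℝ³ be such that for all t: λ̊(t)² + ‖λ(t)‖² = 1, HasDerivAt λ̊ (-(1/2) * ⟪ω̃ t, λ t⟫) t, and HasDerivAt λ ((1/2) • (λ̊ t • ω̃ t + λ t ×₃ ω̃ t)) t. Define R̃ t := 1 + 2 • (S(λ t) * (λ̊ t • 1 + S(λ t))), the Rodrigues matrix of the unit quaternion curve. Then for every t, HasDerivAt R̃ (R̃ t * S(ω̃ t)) t; i.e. the quaternion kinematic equations imply the rotation kinematics dR̃/dt = R̃ S(ω̃). -/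
open Matrix
noncomputable section

/-- `ℝ³` as Euclidean space (vectors `Fin 3 → ℝ` with the Euclidean norm). -/
abbrev R3 : Type := EuclideanSpace ℝ (Fin 3)

/-- Skew-symmetric cross-product matrix `S(x)` of a vector `x ∈ ℝ³`. -/
def S (x : R3) : Matrix (Fin 3) (Fin 3) ℝ :=
  !![0, -x 2, x 1; x 2, 0, -x 0; -x 1, x 0, 0]

/-- Projection matrix `Π_y := I - y yᵀ` onto the plane orthogonal to `y`. -/
def proj (y : R3) : Matrix (Fin 3) (Fin 3) ℝ := 1 - Matrix.vecMulVec y y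

/-- Matrix–vector product, with the result regarded as an element of `ℝ³`
(so that `‖·‖` is the Euclidean norm). -/
def mulv (M : Matrix (Fin 3) (Fin 3) ℝ) (v : R3) : R3 := WithLp.toLp 2 (M.mulVec v)

/-- Cross product `×₃` regarded as an operation on `ℝ³`. -/
def cross (a b : R3) : R3 := WithLp.toLp 2 (a ⨯₃ b)

/-- Rodrigues rotation matrix `R(λ̊, λ) := I + 2 S(λ)(λ̊ I + S(λ))` of a
quaternion pair `(λ̊, λ)`. -/
def rod (q0 : ℝ) (qv : R3) : Matrix (Fin 3) (Fin 3) ℝ :=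
  1 + 2 • (S qv * (q0 • 1 + S qv))

attribute [local instance] Matrix.normedAddCommGroup Matrix.normedSpace

open scoped RealInnerProductSpace

private lemma hasDerivAt_entry {f : ℝ → Matrix (Fin 3) (Fin 3) ℝ}
    {f' : Matrix (Fin 3) (Fin 3) ℝ} {t : ℝ} (h : HasDerivAt f f' t)
    (i j : Fin 3) : HasDerivAt (fun s => f s i j) (f' i j) t :=
  hasDerivAt_pi.1 (hasDerivAt_pi.1 h i) j

private lemma hasDerivAt_of_entries {f : ℝ → Matrix (Fin 3) (Fin 3) ℝ}
    {f' : Matrix (Fin 3) (Fin 3) ℝ} {t : ℝ}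
    (h : ∀ i j, HasDerivAt (fun s => f s i j) (f' i j) t) :
    HasDerivAt f f' t :=
  hasDerivAt_pi.2 fun i => hasDerivAt_pi.2 fun j => h i j

private lemma hasDerivAt_matmul {f g : ℝ → Matrix (Fin 3) (Fin 3) ℝ}
    {f' g' : Matrix (Fin 3) (Fin 3) ℝ} {t : ℝ}
    (hf : HasDerivAt f f' t) (hg : HasDerivAt g g' t) :
    HasDerivAt (fun s => f s * g s) (f' * g t + f t * g') t := by
  apply hasDerivAt_of_entries
  intro i j
  simp only [Matrix.mul_apply, Matrix.add_apply, ← Finset.sum_add_distrib]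
  exact HasDerivAt.fun_sum fun k _ =>
    ((hasDerivAt_entry hf i k).mul (hasDerivAt_entry hg k j))

set_option maxHeartbeats 2000000 in
/-- the quaternion kinematic equations imply the rotation
kinematics of the associated Rodrigues matrix. -/
theorem stmt_13 (q0 : ℝ → ℝ) (qv wt : ℝ → R3)
    (hunit : ∀ t, (q0 t) ^ 2 + ‖qv t‖ ^ 2 = 1)
    (hq0 : ∀ t, HasDerivAt q0 (-(1 / 2) * ⟪wt t, qv t⟫) t)
    (hqv : ∀ t,
      HasDerivAt qv ((1 / 2 : ℝ) • (q0 t • wt t + cross (qv t) (wt t))) t) :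
    ∀ t, HasDerivAt (fun s => rod (q0 s) (qv s))
      (rod (q0 t) (qv t) * S (wt t)) t := by
  intro t
  set v' : R3 := (1 / 2 : ℝ) • (q0 t • wt t + cross (qv t) (wt t)) with hv'
  set a' : ℝ := -(1 / 2) * ⟪wt t, qv t⟫ with ha'
  have hv'i : ∀ i : Fin 3, v' i
      = 2⁻¹ * (q0 t * wt t i) + 2⁻¹ * cross (qv t) (wt t) i := by
    intro i
    simp [hv', mul_add]
  have hv : ∀ i : Fin 3, HasDerivAt (fun s => qv s i) (v' i) t := by
    intro i
    rw [hv'i]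
    simpa [Function.comp_def] using (EuclideanSpace.proj i : R3 →L[ℝ] ℝ).hasFDerivAt.comp_hasDerivAt t (hqv t)
  have hS : HasDerivAt (fun s => S (qv s)) (S v') t := by
    apply hasDerivAt_of_entries
    intro i j
    fin_cases i <;> fin_cases j <;>
      simp only [S, Matrix.cons_val_zero, Matrix.cons_val_one, Matrix.head_cons,
        Matrix.cons_val', Matrix.empty_val',
        Matrix.cons_val_fin_one, Matrix.of_apply, Matrix.cons_val_two,
        Matrix.tail_cons, Fin.mk_zero, Fin.mk_one] <;>
      first
        | exact hasDerivAt_const _ _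
        | exact (hv _).neg
        | exact hv _
  have hin : HasDerivAt (fun s => q0 s • (1 : Matrix (Fin 3) (Fin 3) ℝ) + S (qv s))
      (a' • 1 + S v') t := ((hq0 t).smul_const _).add hS
  have hmul := hasDerivAt_matmul hS hin
  have hrod : HasDerivAt (fun s => rod (q0 s) (qv s))
      (2 • (S v' * (q0 t • 1 + S (qv t)) + S (qv t) * (a' • 1 + S v'))) t := by
    exact (hmul.const_smul (2 : ℕ)).const_add
      (1 : Matrix (Fin 3) (Fin 3) ℝ)
  convert hrod using 1
  have h : q0 t ^ 2 + (qv t 0 ^ 2 + qv t 1 ^ 2 + qv t 2 ^ 2) = 1 := by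
    have := hunit t
    rw [EuclideanSpace.norm_eq, Real.sq_sqrt (by positivity)] at this
    simpa [PiLp.inner_apply, Fin.sum_univ_three, sq] using this
  have hc0 : cross (qv t) (wt t) 0 = qv t 1 * wt t 2 - qv t 2 * wt t 1 := by
    simp [cross, crossProduct]
  have hc1 : cross (qv t) (wt t) 1 = qv t 2 * wt t 0 - qv t 0 * wt t 2 := by
    simp [cross, crossProduct]
  have hc2 : cross (qv t) (wt t) 2 = qv t 0 * wt t 1 - qv t 1 * wt t 0 := by
    simp [cross, crossProduct]
  have hA : a' = -(1 / 2) * (wt t 0 * qv t 0 + wt t 1 * qv t 1 + wt t 2 * qv t 2) := by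
    simp [ha', PiLp.inner_apply, Fin.sum_univ_three]
    ring
  ext i j
  fin_cases i <;> fin_cases j <;>
    simp [rod, S, Matrix.mul_apply, Matrix.one_fin_three, two_nsmul,
      Fin.sum_univ_three, Matrix.add_apply, Matrix.smul_apply,
      hv'i, hc0, hc1, hc2, hA] <;>
    first
      | linear_combination (wt t 0) * h
      | linear_combination (-(wt t 0)) * h
      | linear_combination (wt t 1) * h
      | linear_combination (-(wt t 1)) * h
      | linear_combination (wt t 2) * h
      | linear_combination (-(wt t 2)) * h
      | linear_combination (0 : ℝ) * h
end
end

section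
/- Let R̂, R̂_j be real 3×3 matrices in SO(3), let (λ̊, λ) ∈ ℝ × ℝ³ with λ̊² + ‖λ‖² = 1 and λ̊ ≥ 0, and set R := R̂ * R(λ̊, λ) where R(λ̊, λ) := 1 + 2 • (S(λ) * (λ̊ • 1 + S(λ))). Let p, p̂_j, p̄_j ∈ ℝ³ with p - Rᵀ *ᵥ p̄_j ≠ 0, define the bearing g := ‖p - Rᵀ *ᵥ p̄_j‖⁻¹ • (p - Rᵀ *ᵥ p̄_j), the projector Π_g := 1 - Matrix.vecMulVec g g, the measurement y := Π_g *ᵥ (R̂ᵀ *ᵥ (R̂_j *ᵥ p̂_j)), the vector z := R̂ᵀ *ᵥ (R̂_j *ᵥ p̂_j), and d := Π_g *ᵥ (R̂ᵀ *ᵥ (p̄_j - R̂_j *ᵥ p̂_j)). Then ‖y - (Π_g *ᵥ p - Π_g *ᵥ (z ×₃ (2 • λ)) - d)‖ ≤ 4 * ‖λ‖² * ‖p̄_j‖ + 2 * ‖λ‖ * ‖p̄_j - R̂_j *ᵥ p̂_j‖. (This is the quantitative version of the paper's measurement representation y_{ij} = -Π_{g_{ij}} S(R̂_iᵀ R̂_j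 p̂_j)(2λ_i) + Π_{g_{ij}} p_i - D_{ij} + O(|p̄_j||λ_i|²) + O(|p̄_j - R̂_j p̂_j||λ_i|).) -/
open Matrix
noncomputable section

lemma norm_sq3 (v : R3) : ‖v‖^2 = v 0^2 + v 1^2 + v 2^2 := by
  rw [EuclideanSpace.norm_eq, Real.sq_sqrt (by positivity)]
  simp [Fin.sum_univ_three, sq]

lemma mulv_orth (M : Matrix (Fin 3) (Fin 3) ℝ) (hM : Mᵀ * M = 1) (v : R3) :
    ‖mulv M v‖ = ‖v‖ := by
  have key : Mᵀ *ᵥ (M *ᵥ v) = v := by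
    rw [Matrix.mulVec_mulVec, hM, Matrix.one_mulVec]
  have h2 : (M *ᵥ v) ⬝ᵥ (M *ᵥ v) = v ⬝ᵥ v := by
    rw [dotProduct_mulVec, ← Matrix.mulVec_transpose, key]
  have hsq : ‖mulv M v‖^2 = ‖v‖^2 := by
    rw [norm_sq3, norm_sq3]
    simpa [dotProduct, Fin.sum_univ_three, sq, mulv] using h2
  have h1 := norm_nonneg (mulv M v); have h0 := norm_nonneg v
  nlinarith [sq_nonneg (‖mulv M v‖ - ‖v‖), sq_nonneg (‖mulv M v‖ + ‖v‖)]

lemma proj_apply (g v : R3) :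
    mulv (proj g) v = v - (g ⬝ᵥ v) • g := by
  ext i
  fin_cases i <;>
  simp [mulv, proj, Matrix.sub_mulVec, Matrix.one_mulVec, Matrix.vecMulVec, Matrix.mulVec,
    dotProduct, Fin.sum_univ_three] <;>
  ring

lemma proj_norm_le (g v : R3) (hg : ‖g‖ = 1) : ‖mulv (proj g) v‖ ≤ ‖v‖ := by
  have hgsq : g 0^2 + g 1^2 + g 2^2 = 1 := by rw [← norm_sq3, hg]; norm_num
  have hsq : ‖mulv (proj g) v‖^2 ≤ ‖v‖^2 := by
    rw [proj_apply, norm_sq3, norm_sq3]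
    have hc : g ⬝ᵥ v = g 0 * v 0 + g 1 * v 1 + g 2 * v 2 := by
      simp [dotProduct, Fin.sum_univ_three]
    simp only [PiLp.sub_apply, PiLp.smul_apply, smul_eq_mul, hc]
    nlinarith [sq_nonneg (g 0 * v 0 + g 1 * v 1 + g 2 * v 2)]
  nlinarith [norm_nonneg (mulv (proj g) v), norm_nonneg v]

lemma cross_norm_le (a b : R3) : ‖cross a b‖ ≤ ‖a‖ * ‖b‖ := by
  have hsq : ‖cross a b‖^2 ≤ (‖a‖ * ‖b‖)^2 := by
    have : (‖a‖ * ‖b‖)^2 = ‖a‖^2 * ‖b‖^2 := by ring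
    rw [this, norm_sq3, norm_sq3, norm_sq3]
    simp only [cross, crossProduct]
    simp [Fin.sum_univ_three]
    nlinarith [sq_nonneg (a 0 * b 0 + a 1 * b 1 + a 2 * b 2)]
  nlinarith [norm_nonneg (cross a b), mul_nonneg (norm_nonneg a) (norm_nonneg b)]

lemma proj_kill (u : R3) (hu : u ≠ 0) :
    mulv (proj (‖u‖⁻¹ • u)) u = 0 := by
  have hn : ‖u‖ ≠ 0 := norm_ne_zero_iff.2 hu
  rw [proj_apply]
  have hd : (‖u‖⁻¹ • u) ⬝ᵥ u = ‖u‖ := by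
    simp only [dotProduct, Fin.sum_univ_three, PiLp.smul_apply, smul_eq_mul]
    rw [show ‖u‖⁻¹ * u 0 * u 0 + ‖u‖⁻¹ * u 1 * u 1 + ‖u‖⁻¹ * u 2 * u 2
        = ‖u‖⁻¹ * (u 0^2 + u 1^2 + u 2^2) by ring, ← norm_sq3, sq, ← mul_assoc,
      inv_mul_cancel₀ hn, one_mul]
  rw [hd, smul_smul]
  field_simp
  rw [one_smul, sub_self]

lemma key_id (q0 : ℝ) (qv w e : R3) :
    (w - e) - mulv (rod q0 qv)ᵀ w + cross (w - e) (2 • qv) + e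
      = (2*(q0-1)) • cross qv w - (2:ℝ) • cross qv (cross qv w) + (2:ℝ) • cross qv e := by
  ext i
  fin_cases i <;>
    simp [mulv, rod, S, cross, crossProduct, Matrix.mulVec, dotProduct,
      Fin.sum_univ_three, Matrix.transpose_apply, Matrix.add_apply, Matrix.smul_apply,
      Matrix.mul_apply, Matrix.one_apply, Matrix.sub_apply, Matrix.vecMul, Matrix.vecHead,
      Matrix.vecTail, Function.comp] <;>
    ring

lemma mulv_sub (M : Matrix (Fin 3) (Fin 3) ℝ) (a b : R3) :
    mulv M (a - b) = mulv M a - mulv M b := by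
  ext i
  simp [mulv, Matrix.mulVec, dotProduct, Fin.sum_univ_three]
  ring

lemma mulv_add (M : Matrix (Fin 3) (Fin 3) ℝ) (a b : R3) :
    mulv M (a + b) = mulv M a + mulv M b := by
  ext i
  simp [mulv, Matrix.mulVec, dotProduct, Fin.sum_univ_three]
  ring

lemma mulv_mulv (A B : Matrix (Fin 3) (Fin 3) ℝ) (v : R3) :
    mulv (A * B) v = mulv A (mulv B v) := by
  ext i
  exact congrFun (Matrix.mulVec_mulVec v A B).symm i

set_option maxHeartbeats 1000000 in
/-- quantitative version of the measurement representation of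
the bearing output used by the observer. -/
theorem stmt_14 (Rh Rhj : Matrix (Fin 3) (Fin 3) ℝ)
    (hRh : Rhᵀ * Rh = 1 ∧ Rh.det = 1) (hRhj : Rhjᵀ * Rhj = 1 ∧ Rhj.det = 1)
    (q0 : ℝ) (qv : R3) (hq : q0 ^ 2 + ‖qv‖ ^ 2 = 1) (hq0 : 0 ≤ q0)
    (p phj pbj : R3)
    (hne : p - mulv (Rh * rod q0 qv)ᵀ pbj ≠ 0) :
    let R := Rh * rod q0 qv
    let g : R3 := ‖p - mulv Rᵀ pbj‖⁻¹ • (p - mulv Rᵀ pbj)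
    let z : R3 := mulv Rhᵀ (mulv Rhj phj)
    let y : R3 := mulv (proj g) z
    let d : R3 := mulv (proj g) (mulv Rhᵀ (pbj - mulv Rhj phj))
    ‖y - (mulv (proj g) p - mulv (proj g) (cross z (2 • qv)) - d)‖ ≤
      4 * ‖qv‖ ^ 2 * ‖pbj‖ + 2 * ‖qv‖ * ‖pbj - mulv Rhj phj‖ := by
  intro R g z y d
  set w : R3 := mulv Rhᵀ pbj with hw
  set e : R3 := mulv Rhᵀ (pbj - mulv Rhj phj) with he
  have hRhO : Rh * Rhᵀ = 1 := mul_eq_one_comm.mp hRh.1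
  have hRhtO : (Rhᵀ)ᵀ * Rhᵀ = 1 := by rw [Matrix.transpose_transpose]; exact hRhO
  -- unit bearing
  have hg1 : ‖g‖ = 1 := by
    rw [norm_smul, norm_inv, norm_norm, inv_mul_cancel₀ (norm_ne_zero_iff.2 hne)]
  -- z = w - e
  have hz : z = w - e := by
    rw [hw, he, ← mulv_sub, sub_sub_cancel]
  -- Rᵀ pbj = rodᵀ w
  have hRt : mulv Rᵀ pbj = mulv (rod q0 qv)ᵀ w := by
    rw [show Rᵀ = (rod q0 qv)ᵀ * Rhᵀ from Matrix.transpose_mul Rh (rod q0 qv), mulv_mulv, hw]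
  -- projection kills p - Rᵀ pbj
  have hPp : mulv (proj g) p - mulv (proj g) (mulv Rᵀ pbj) = 0 := by
    rw [← mulv_sub]
    exact proj_kill (p - mulv Rᵀ pbj) hne
  -- the error vector
  set E : R3 := (2*(q0-1)) • cross qv w - (2:ℝ) • cross qv (cross qv w) + (2:ℝ) • cross qv e
    with hE
  have hvec : z - mulv Rᵀ pbj + cross z (2 • qv) + e = E := by
    rw [hz, hRt, hE]
    exact key_id q0 qv w e
  have hdiff : y - (mulv (proj g) p - mulv (proj g) (cross z (2 • qv)) - d) =
      mulv (proj g) E := by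
    have h1 : y - (mulv (proj g) p - mulv (proj g) (cross z (2 • qv)) - d) =
        mulv (proj g) z - (mulv (proj g) p - mulv (proj g) (mulv Rᵀ pbj))
          - mulv (proj g) (mulv Rᵀ pbj) + mulv (proj g) (cross z (2 • qv))
          + mulv (proj g) e := by
      simp only [y, d]
      abel
    rw [h1, hPp, ← hvec, mulv_add, mulv_add, mulv_sub]
    abel
  rw [hdiff]
  -- norm bounds
  have hwn : ‖w‖ = ‖pbj‖ := mulv_orth Rhᵀ hRhtO pbj
  have hen : ‖e‖ = ‖pbj - mulv Rhj phj‖ := mulv_orth Rhᵀ hRhtO _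
  have ha0 : 0 ≤ ‖qv‖ := norm_nonneg qv
  have ha1 : ‖qv‖ ≤ 1 := by nlinarith
  have hq01 : q0 ≤ 1 := by nlinarith
  have hq0' : 1 - q0 ≤ ‖qv‖^2 := by nlinarith
  have hcw : ‖cross qv w‖ ≤ ‖qv‖ * ‖pbj‖ := by rw [← hwn]; exact cross_norm_le qv w
  have hcww : ‖cross qv (cross qv w)‖ ≤ ‖qv‖ * (‖qv‖ * ‖pbj‖) := by
    calc ‖cross qv (cross qv w)‖ ≤ ‖qv‖ * ‖cross qv w‖ := cross_norm_le _ _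
      _ ≤ ‖qv‖ * (‖qv‖ * ‖pbj‖) := by
        exact mul_le_mul_of_nonneg_left hcw ha0
  have hce : ‖cross qv e‖ ≤ ‖qv‖ * ‖pbj - mulv Rhj phj‖ := by
    rw [← hen]; exact cross_norm_le qv e
  have hEn : ‖E‖ ≤ 2*(1-q0) * ‖cross qv w‖ + 2 * ‖cross qv (cross qv w)‖
      + 2 * ‖cross qv e‖ := by
    rw [hE]
    calc ‖(2*(q0-1)) • cross qv w - (2:ℝ) • cross qv (cross qv w) + (2:ℝ) • cross qv e‖
        ≤ ‖(2*(q0-1)) • cross qv w - (2:ℝ) • cross qv (cross qv w)‖ + ‖(2:ℝ) • cross qv e‖ :=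
          norm_add_le _ _
      _ ≤ ‖(2*(q0-1)) • cross qv w‖ + ‖(2:ℝ) • cross qv (cross qv w)‖ + ‖(2:ℝ) • cross qv e‖ := by
          have := norm_sub_le ((2*(q0-1)) • cross qv w) ((2:ℝ) • cross qv (cross qv w))
          linarith
      _ = 2*(1-q0) * ‖cross qv w‖ + 2 * ‖cross qv (cross qv w)‖ + 2 * ‖cross qv e‖ := by
          have h3 : |q0-1| = 1-q0 := by
            rw [abs_of_nonpos (by linarith)]; ring
          simp [norm_smul, abs_mul, h3]
  have hfin : ‖mulv (proj g) E‖ ≤ ‖E‖ := proj_norm_le g E hg1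
  have hbn : 0 ≤ ‖pbj‖ := norm_nonneg pbj
  have hcn : 0 ≤ ‖cross qv w‖ := norm_nonneg _
  nlinarith [mul_nonneg ha0 hbn, mul_nonneg (mul_nonneg ha0 ha0) hbn,
    mul_nonneg (norm_nonneg (pbj - mulv Rhj phj)) ha0,
    mul_le_mul_of_nonneg_left hcw (by nlinarith : (0:ℝ) ≤ 2*(1-q0)),
    mul_le_mul_of_nonneg_right hq0' (mul_nonneg ha0 hbn)]
end
end
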